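/- For C_1, C_2 > 1, the ratio R(λ) = p_2'(λ)/p_1'(λ) = (−C_1C_2 − C_1(2λ−1) + λ²)/(C_1C_2 − C_2(2λ−1) − (1−λ)²) is strictly decreasing in λ on (0,1). -/

import Mathlib

theorem stmt8 (C1 C2 : ℝ) (hC1 : 1 < C1) (hC2 : 1 < C2) :
    (∀ lam ∈ Set.Ioo (0:ℝ) 1,
      deriv (fun l => (C1 - l) / (C1 * C2 - l * (1 - l))) lam /
        deriv (fun l => (C2 - (1 - l)) / (C1 * C2 - l * (1 - l))) lam =
      (-(C1 * C2) - C1 * (2 * lam - 1) + lam ^ 2) /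
        (C1 * C2 - C2 * (2 * lam - 1) - (1 - lam) ^ 2)) ∧
    StrictAntiOn (fun lam => (-(C1 * C2) - C1 * (2 * lam - 1) + lam ^ 2) /
        (C1 * C2 - C2 * (2 * lam - 1) - (1 - lam) ^ 2)) (Set.Ioo (0:ℝ) 1) := by
  have hM : ∀ l ∈ Set.Ioo (0:ℝ) 1,
      0 < C1 * C2 - C2 * (2 * l - 1) - (1 - l) ^ 2 := by
    intro l hl
    obtain ⟨h0, h1⟩ := hl
    nlinarith [mul_pos (sub_pos.2 hC1) (sub_pos.2 hC2), mul_pos h0 (sub_pos.2 h1),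
      mul_pos (sub_pos.2 hC2) (sub_pos.2 h1)]
  constructor
  · intro lam hlam
    obtain ⟨h0, h1⟩ := hlam
    have hgpos : 0 < C1 * C2 - lam * (1 - lam) := by
      nlinarith [mul_pos (sub_pos.2 hC1) (sub_pos.2 hC2), mul_pos h0 (sub_pos.2 h1)]
    have hgne : C1 * C2 - lam * (1 - lam) ≠ 0 := ne_of_gt hgpos
    have hg : HasDerivAt (fun l : ℝ => C1 * C2 - l * (1 - l)) (2 * lam - 1) lam := by
      have := ((hasDerivAt_id lam).mul ((hasDerivAt_id lam).const_sub 1)).const_sub (C1 * C2)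
      refine this.congr_deriv ?_
      simp only [id]
      ring
    have hp2 : HasDerivAt (fun l : ℝ => (C1 - l) / (C1 * C2 - l * (1 - l)))
        (((-1) * (C1 * C2 - lam * (1 - lam)) - (C1 - lam) * (2 * lam - 1)) /
          (C1 * C2 - lam * (1 - lam)) ^ 2) lam :=
      ((hasDerivAt_id lam).const_sub C1).div hg hgne
    have hp1 : HasDerivAt (fun l : ℝ => (C2 - (1 - l)) / (C1 * C2 - l * (1 - l)))
        ((1 * (C1 * C2 - lam * (1 - lam)) - (C2 - (1 - lam)) * (2 * lam - 1)) /
          (C1 * C2 - lam * (1 - lam)) ^ 2) lam := by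
      have := (((hasDerivAt_id lam).const_sub 1).const_sub C2).div hg hgne
      refine this.congr_deriv ?_
      simp [id]
    rw [hp2.deriv, hp1.deriv]
    have hMne : C1 * C2 - C2 * (2 * lam - 1) - (1 - lam) ^ 2 ≠ 0 :=
      ne_of_gt (hM lam ⟨h0, h1⟩)
    have hnum1 : 1 * (C1 * C2 - lam * (1 - lam)) - (C2 - (1 - lam)) * (2 * lam - 1) =
        C1 * C2 - C2 * (2 * lam - 1) - (1 - lam) ^ 2 := by ring
    have hnum2 : (-1) * (C1 * C2 - lam * (1 - lam)) - (C1 - lam) * (2 * lam - 1) =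
        -(C1 * C2) - C1 * (2 * lam - 1) + lam ^ 2 := by ring
    rw [hnum1, hnum2]
    rw [div_div_div_eq, mul_comm, mul_div_mul_left _ _ (pow_ne_zero 2 hgne)]
  · intro a ha b hb hab
    have hMa := hM a ha
    have hMb := hM b hb
    simp only
    rw [div_lt_div_iff₀ hMb hMa]
    have key : 0 < (C1 + C2 - 1) * (b - a) * (2 * C1 * C2 + 2 * a * b - a - b) := by
      have h1 : 0 < C1 + C2 - 1 := by linarith
      have h2 : 0 < b - a := by linarith
      have h3 : 0 < 2 * C1 * C2 + 2 * a * b - a - b := by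
        obtain ⟨ha0, ha1⟩ := ha
        obtain ⟨hb0, hb1⟩ := hb
        nlinarith [mul_pos (sub_pos.2 hC1) (sub_pos.2 hC2), mul_pos ha0 hb0]
      exact mul_pos (mul_pos h1 h2) h3
    nlinarith [key]
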